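/- Let X₁, X₂, … be i.i.d. Bernoulli with P(Xᵢ=1)=μ₀ ∈ (0,1) and X₁^a, X₂^a, … i.i.d. Bernoulli with P(Xᵢ^a=1)=a, all independent, with μ₀ < a < 1. Let D_k = ∑_{i=1}^k (X_i^a − X_i). Then P(D_i > 0 for all i ≥ 1) = a − μ₀. -/

import Mathlib

namespace Stmt9Aux

open scoped Classical

variable (n : ℕ) (z : ℕ → ℤ)

/-- partial sums of the n-periodic extension of z -/
def psum (j : ℕ) : ℤ := ∑ i ∈ Finset.range j, z (i % n)

lemma psum_succ (j : ℕ) : psum n z (j + 1) = psum n z j + z (j % n) :=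
  Finset.sum_range_succ _ _

lemma psum_add (j k : ℕ) :
    psum n z (j + k) = psum n z j + ∑ i ∈ Finset.range k, z ((j + i) % n) := by
  induction k with
  | zero => simp
  | succ k ih =>
      rw [← Nat.add_assoc, psum_succ, ih, Finset.sum_range_succ, ← add_assoc]

lemma shift_sum_eq (hn : 0 < n) (j : ℕ) :
    ∑ i ∈ Finset.range n, z ((j + i) % n) = psum n z n := by
  induction j with
  | zero => simp [psum]
  | succ j ih =>
      rw [← ih]
      obtain ⟨m, rfl⟩ : ∃ m, n = m + 1 := ⟨n - 1, by omega⟩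
      rw [Finset.sum_range_succ, Finset.sum_range_succ']
      have h1 : ∀ i, j + 1 + i = j + (i + 1) := by intro i; ring
      simp only [h1]
      have h3 : (j + (m + 1)) % (m + 1) = (j + 0) % (m + 1) := by
        simp [Nat.add_mod_right]
      rw [h3]

lemma psum_period (hn : 0 < n) (j : ℕ) :
    psum n z (j + n) = psum n z j + psum n z n := by
  rw [psum_add, shift_sum_eq n z hn]

lemma psum_add_mul (hn : 0 < n) (j k : ℕ) :
    psum n z (j + k * n) = psum n z j + k * psum n z n := by
  induction k with
  | zero => simp
  | succ k ih =>
      have h : j + (k + 1) * n = (j + k * n) + n := by ring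
      rw [h, psum_period n z hn, ih]
      push_cast; ring

/-- the "good shift" predicate -/
def good (r : ℕ) : Prop := ∀ k ∈ Finset.Icc 1 n, psum n z r < psum n z (r + k)

/-- strict future minimum -/
def Rp (r : ℕ) : Prop := ∀ j, r < j → psum n z r < psum n z j

lemma good_iff_Rp (hn : 0 < n) (hm : 1 ≤ psum n z n) (r : ℕ) :
    good n z r ↔ Rp n z r := by
  constructor
  · intro hg j hj
    induction j using Nat.strong_induction_on with
    | _ j ih =>
      rcases le_or_gt j (r + n) with h | h
      · exact (hg (j - r) (Finset.mem_Icc.mpr ⟨by omega, by omega⟩)).trans_eq (by congr 1; omega)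
      · have h1 : j - n < j := by omega
        have h2 : r < j - n := by omega
        have h4 := ih (j - n) h1 h2
        have h3 : j = (j - n) + n := by omega
        rw [h3, psum_period n z hn]
        omega
  · intro hR k hk
    exact hR (r + k) (by simp at hk; omega)

lemma Rp_period (hn : 0 < n) (r : ℕ) : Rp n z (r + n) ↔ Rp n z r := by
  constructor
  · intro h j hj
    have h2 := h (j + n) (by omega)
    rw [psum_period n z hn, psum_period n z hn] at h2
    omega
  · intro h j hj
    rcases le_or_gt n j with h' | h'
    · have h2 := h (j - n) (by omega)
      have h3 : j = (j - n) + n := by omega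
      rw [psum_period n z hn, h3, psum_period n z hn]
      omega
    · omega

/-- min of psum over one (closed) period -/
noncomputable def mn : ℤ := ((Finset.range (n + 1)).image (psum n z)).min'
  ⟨psum n z 0, Finset.mem_image_of_mem _ (Finset.mem_range.mpr (by omega))⟩

lemma mn_le (j : ℕ) (hj : j ≤ n) : mn n z ≤ psum n z j :=
  Finset.min'_le _ _ (Finset.mem_image_of_mem _ (Finset.mem_range.mpr (by omega)))

lemma exists_mn : ∃ j, j ≤ n ∧ psum n z j = mn n z := by
  have h := ((Finset.range (n + 1)).image (psum n z)).min'_mem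
    ⟨psum n z 0, Finset.mem_image_of_mem _ (Finset.mem_range.mpr (by omega))⟩
  simp only [Finset.mem_image, Finset.mem_range] at h
  obtain ⟨j, hj, hje⟩ := h
  exact ⟨j, by omega, hje⟩

lemma mn_le_all (hn : 0 < n) (hm : 1 ≤ psum n z n) (j : ℕ) : mn n z ≤ psum n z j := by
  induction j using Nat.strong_induction_on with
  | _ j ih =>
    rcases le_or_gt j n with h | h
    · exact mn_le n z j h
    · have h4 := ih (j - n) (by omega)
      have h3 : j = (j - n) + n := by omega
      have h2 := psum_period n z hn (j - n)
      rw [← h3] at h2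
      omega

lemma argmin_lt_n (hn : 0 < n) (hm : 1 ≤ psum n z n) (j : ℕ)
    (hj : psum n z j = mn n z) : j < n := by
  by_contra h
  push_neg at h
  have h3 : j = (j - n) + n := by omega
  have h2 := psum_period n z hn (j - n)
  rw [← h3] at h2
  have h4 := mn_le_all n z hn hm (j - n)
  omega

lemma psum_lower (hn : 0 < n) (hm : 1 ≤ psum n z n) (j : ℕ) :
    mn n z + (j / n : ℕ) ≤ psum n z j := by
  have h2 := psum_add_mul n z hn (j % n) (j / n)
  have h5 : psum n z j = psum n z (j % n) + (j / n : ℕ) * psum n z n := by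
    conv_lhs => rw [← Nat.mod_add_div' j n]
    exact h2
  have h3 := mn_le n z (j % n) (le_of_lt (Nat.mod_lt _ hn))
  have h4 : ((j / n : ℕ) : ℤ) * 1 ≤ ((j / n : ℕ) : ℤ) * psum n z n :=
    mul_le_mul_of_nonneg_left hm (by positivity)
  omega

/-- first passage: the walk reaches every value above its current position -/
lemma first_passage (hn : 0 < n) (hz : ∀ i, z i ≤ 1) (hm : 1 ≤ psum n z n)
    (j : ℕ) (v : ℤ) (h : psum n z j ≤ v) :
    ∃ t, j ≤ t ∧ psum n z t = v := by
  have hex : ∃ t, j ≤ t ∧ v ≤ psum n z t := by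
    refine ⟨j + (v - mn n z).toNat * n, by omega, ?_⟩
    rw [psum_add_mul n z hn]
    have h1 := mn_le_all n z hn hm j
    have h2 : ((v - mn n z).toNat : ℤ) * 1 ≤ ((v - mn n z).toNat : ℤ) * psum n z n :=
      mul_le_mul_of_nonneg_left hm (by positivity)
    have h3 : v - mn n z ≤ ((v - mn n z).toNat : ℤ) := Int.self_le_toNat _
    omega
  refine ⟨Nat.find hex, (Nat.find_spec hex).1, ?_⟩
  have ht0v := (Nat.find_spec hex).2
  rcases Nat.eq_or_lt_of_le (Nat.find_spec hex).1 with heq | hlt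
  · rw [← heq]; rw [← heq] at ht0v; omega
  · obtain ⟨s, hs⟩ : ∃ s, Nat.find hex = s + 1 := ⟨Nat.find hex - 1, by omega⟩
    have hprev : ¬ (j ≤ s ∧ v ≤ psum n z s) := Nat.find_min hex (by omega)
    push_neg at hprev
    have h5 : psum n z s < v := hprev (by omega)
    have h7 : psum n z (Nat.find hex) = psum n z s + z (s % n) := by
      rw [hs, psum_succ]
    have h8 := hz (s % n)
    omega

/-- the last argmin -/
noncomputable def r0 : ℕ :=
  ((Finset.range (n + 1)).filter (fun j => psum n z j = mn n z)).max' (by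
    obtain ⟨j, hj, hje⟩ := exists_mn n z
    exact ⟨j, Finset.mem_filter.mpr ⟨Finset.mem_range.mpr (by omega), hje⟩⟩)

lemma r0_val : psum n z (r0 n z) = mn n z := by
  have h := ((Finset.range (n + 1)).filter (fun j => psum n z j = mn n z)).max'_mem (by
    obtain ⟨j, hj, hje⟩ := exists_mn n z
    exact ⟨j, Finset.mem_filter.mpr ⟨Finset.mem_range.mpr (by omega), hje⟩⟩)
  exact (Finset.mem_filter.mp h).2

lemma r0_lt (hn : 0 < n) (hm : 1 ≤ psum n z n) : r0 n z < n :=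
  argmin_lt_n n z hn hm _ (r0_val n z)

lemma Rp_r0 (hn : 0 < n) (hm : 1 ≤ psum n z n) : Rp n z (r0 n z) := by
  intro j hj
  have h1 := mn_le_all n z hn hm j
  rw [r0_val n z]
  rcases eq_or_lt_of_le h1 with heq | hlt
  · exfalso
    have hjn : j < n := argmin_lt_n n z hn hm j heq.symm
    have h2 : j ≤ r0 n z := Finset.le_max' _ _ (Finset.mem_filter.mpr
      ⟨Finset.mem_range.mpr (by omega), heq.symm⟩)
    omega
  · exact hlt

section Count

variable {n : ℕ} {z : ℕ → ℤ}

lemma surj_aux (hn : 0 < n) (hz : ∀ i, z i ≤ 1) (hm : 1 ≤ psum n z n)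
    (v : ℤ) (hv1 : mn n z ≤ v) (hv2 : v < mn n z + psum n z n) :
    ∃ j, r0 n z ≤ j ∧ j < r0 n z + n ∧ Rp n z j ∧ psum n z j = v := by
  set N := n * ((v - mn n z).toNat + 1) with hN
  have hbound : ∀ t, psum n z t = v → t < N := by
    intro t ht
    have h1 := psum_lower n z hn hm t
    have h2 : (t / n : ℤ) ≤ v - mn n z := by omega
    have h3 : t / n ≤ (v - mn n z).toNat := by omega
    have h4 : t = n * (t / n) + t % n := (Nat.div_add_mod t n).symm
    have h5 : t % n < n := Nat.mod_lt _ hn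
    calc t = n * (t / n) + t % n := h4
    _ < n * (t / n) + n := by omega
    _ = n * (t / n + 1) := by ring
    _ ≤ N := by
        rw [hN]
        exact Nat.mul_le_mul_left _ (by omega)
  have hT : ∃ t, t ∈ (Finset.range N).filter (fun t => psum n z t = v) := by
    obtain ⟨t, ht1, ht2⟩ := first_passage n z hn hz hm (r0 n z) v (by rw [r0_val]; exact hv1)
    exact ⟨t, Finset.mem_filter.mpr ⟨Finset.mem_range.mpr (hbound t ht2), ht2⟩⟩
  set T := (Finset.range N).filter (fun t => psum n z t = v) with hTdef
  have hTne : T.Nonempty := hT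
  set tv := T.max' hTne with htv
  have htvmem := T.max'_mem hTne
  have htvval : psum n z tv = v := (Finset.mem_filter.mp htvmem).2
  -- tv ≥ r0
  obtain ⟨t, ht1, ht2⟩ := first_passage n z hn hz hm (r0 n z) v (by rw [r0_val]; exact hv1)
  have htmem : t ∈ T := Finset.mem_filter.mpr ⟨Finset.mem_range.mpr (hbound t ht2), ht2⟩
  have htvge : r0 n z ≤ tv := le_trans ht1 (Finset.le_max' _ _ htmem)
  -- tv < r0 + n
  have htvlt : tv < r0 n z + n := by
    by_contra hcon
    push_neg at hcon
    have h3 : tv = (tv - n) + n := by omega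
    have h2 := psum_period n z hn (tv - n)
    rw [← h3] at h2
    have h4 := mn_le_all n z hn hm (tv - n)
    omega
  -- Rp tv
  have hRp : Rp n z tv := by
    intro j hj
    rcases lt_trichotomy (psum n z j) v with h | h | h
    · exfalso
      obtain ⟨t', ht'1, ht'2⟩ := first_passage n z hn hz hm j v (le_of_lt h)
      have : t' ∈ T := Finset.mem_filter.mpr ⟨Finset.mem_range.mpr (hbound t' ht'2), ht'2⟩
      have := Finset.le_max' _ _ this
      omega
    · exfalso
      have : j ∈ T := Finset.mem_filter.mpr ⟨Finset.mem_range.mpr (hbound j h), h⟩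
      have := Finset.le_max' _ _ this
      omega
    · omega
  exact ⟨tv, htvge, htvlt, hRp, htvval⟩

theorem cycle_count (hn : 0 < n) (hz : ∀ i, z i ≤ 1) :
    (((Finset.range n).filter (good n z)).card : ℤ) = max (psum n z n) 0 := by
  rcases le_or_gt (psum n z n) 0 with hm | hm
  · have : (Finset.range n).filter (good n z) = ∅ := by
      rw [Finset.filter_eq_empty_iff]
      intro r _ hg
      have h1 := hg n (Finset.mem_Icc.mpr ⟨by omega, le_refl n⟩)
      have h2 := psum_period n z hn r
      omega
    rw [this, max_eq_right hm, Finset.card_empty]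
    rfl
  · have hm1 : 1 ≤ psum n z n := hm
    have hfe : (Finset.range n).filter (good n z) = (Finset.range n).filter (Rp n z) :=
      Finset.filter_congr (fun r _ => good_iff_Rp n z hn hm1 r)
    have hfe2 : (Finset.range n).filter (Rp n z) =
        (Finset.Ico (r0 n z) (r0 n z + n)).filter (Rp n z) := by
      ext j
      simp only [Finset.mem_filter, Finset.mem_range, Finset.mem_Ico]
      constructor
      · rintro ⟨hj, hRp⟩
        refine ⟨⟨?_, by omega⟩, hRp⟩
        by_contra hcon
        push_neg at hcon
        have h1 := hRp (r0 n z) hcon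
        rw [r0_val] at h1
        have h2 := mn_le_all n z hn hm1 j
        omega
      · rintro ⟨⟨hj1, hj2⟩, hRp⟩
        refine ⟨?_, hRp⟩
        by_contra hcon
        push_neg at hcon
        have h3 : j = (j - n) + n := by omega
        have hRp' : Rp n z (j - n) := by
          rw [← Rp_period n z hn, ← h3]; exact hRp
        have hr0lt : j - n < r0 n z := by omega
        have h1 := hRp' (r0 n z) hr0lt
        rw [r0_val] at h1
        have h2 := mn_le_all n z hn hm1 (j - n)
        omega
    rw [hfe, hfe2]
    have hcard : ((Finset.Ico (r0 n z) (r0 n z + n)).filter (Rp n z)).card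
        = (Finset.Ico (mn n z) (mn n z + psum n z n)).card := by
      apply Finset.card_bij (fun j _ => psum n z j)
      · intro j hj
        rw [Finset.mem_filter, Finset.mem_Ico] at hj
        obtain ⟨⟨hj1, hj2⟩, hRp⟩ := hj
        rw [Finset.mem_Ico]
        constructor
        · exact mn_le_all n z hn hm1 j
        · have h1 := hRp (r0 n z + n) hj2
          have h2 := psum_period n z hn (r0 n z)
          rw [r0_val] at h2
          omega
      · intro j hj j' hj' heq
        rw [Finset.mem_filter, Finset.mem_Ico] at hj hj'
        by_contra hne
        rcases lt_or_gt_of_ne hne with h | h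
        · have := hj.2 j' h; omega
        · have := hj'.2 j h; omega
      · intro v hv
        rw [Finset.mem_Ico] at hv
        obtain ⟨j, h1, h2, h3, h4⟩ := surj_aux hn hz hm1 v hv.1 hv.2
        exact ⟨j, Finset.mem_filter.mpr ⟨Finset.mem_Ico.mpr ⟨h1, h2⟩, h3⟩, h4⟩
    rw [hcard, Int.card_Ico, max_eq_left (by omega : (0:ℤ) ≤ psum n z n)]
    omega

end Count

end Stmt9Aux


open MeasureTheory ProbabilityTheory Real

namespace Stmt9Aux

open scoped Classical

variable {Ω : Type*} [MeasurableSpace Ω] (P : Measure Ω) [IsProbabilityMeasure P]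

lemma bern_zero_eq (Y : Ω → ℝ) (h01 : ∀ ω, Y ω = 0 ∨ Y ω = 1) :
    {ω | Y ω = 0} = {ω | Y ω = 1}ᶜ := by
  ext ω
  rcases h01 ω with h | h <;> simp [h]

lemma bern_preimage (Y : Ω → ℝ) (hm : Measurable Y) (h01 : ∀ ω, Y ω = 0 ∨ Y ω = 1)
    {s : Set ℝ} (hs : MeasurableSet s) :
    P (Y ⁻¹' s) = (if (0:ℝ) ∈ s then P {ω | Y ω = 0} else 0)
      + (if (1:ℝ) ∈ s then P {ω | Y ω = 1} else 0) := by
  have hm0 : MeasurableSet {ω | Y ω = 0} := hm (measurableSet_singleton 0)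
  have hm1 : MeasurableSet {ω | Y ω = 1} := hm (measurableSet_singleton 1)
  have hcov : Y ⁻¹' s = ({ω | Y ω = 0} ∩ Y ⁻¹' s) ∪ ({ω | Y ω = 1} ∩ Y ⁻¹' s) := by
    ext ω
    rcases h01 ω with h | h <;> simp [h, Set.mem_preimage]
  have h0 : {ω | Y ω = 0} ∩ Y ⁻¹' s = if (0:ℝ) ∈ s then {ω | Y ω = 0} else ∅ := by
    split_ifs with h
    · ext ω; simp only [Set.mem_inter_iff, Set.mem_setOf_eq, Set.mem_preimage]
      exact ⟨fun ⟨h1, _⟩ => h1, fun h1 => ⟨h1, h1 ▸ h⟩⟩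
    · ext ω; simp only [Set.mem_inter_iff, Set.mem_setOf_eq, Set.mem_preimage]
      exact ⟨fun ⟨h1, h2⟩ => h (h1 ▸ h2), fun h1 => h1.elim⟩
  have h1 : {ω | Y ω = 1} ∩ Y ⁻¹' s = if (1:ℝ) ∈ s then {ω | Y ω = 1} else ∅ := by
    split_ifs with h
    · ext ω; simp only [Set.mem_inter_iff, Set.mem_setOf_eq, Set.mem_preimage]
      exact ⟨fun ⟨h1, _⟩ => h1, fun h1 => ⟨h1, h1 ▸ h⟩⟩
    · ext ω; simp only [Set.mem_inter_iff, Set.mem_setOf_eq, Set.mem_preimage]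
      exact ⟨fun ⟨h1, h2⟩ => h (h1 ▸ h2), fun h1 => h1.elim⟩
  have hdisj : Disjoint ({ω | Y ω = 0} ∩ Y ⁻¹' s) ({ω | Y ω = 1} ∩ Y ⁻¹' s) := by
    apply Set.disjoint_left.mpr
    rintro ω ⟨ha, -⟩ ⟨hb, -⟩
    simp only [Set.mem_setOf_eq] at ha hb
    rw [ha] at hb; norm_num at hb
  rw [hcov, measure_union hdisj (hm1.inter (hm hs)), h0, h1]
  split_ifs <;> simp



lemma bern_map_eq (Y Y' : Ω → ℝ) (hm : Measurable Y) (hm' : Measurable Y')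
    (h01 : ∀ ω, Y ω = 0 ∨ Y ω = 1) (h01' : ∀ ω, Y' ω = 0 ∨ Y' ω = 1)
    (hmass : P {ω | Y ω = 1} = P {ω | Y' ω = 1}) :
    P.map Y = P.map Y' := by
  have hmass0 : P {ω | Y ω = 0} = P {ω | Y' ω = 0} := by
    rw [bern_zero_eq Y h01, bern_zero_eq Y' h01',
      measure_compl (show MeasurableSet {ω | Y ω = 1} from hm (measurableSet_singleton 1))
        (measure_ne_top _ _),
      measure_compl (show MeasurableSet {ω | Y' ω = 1} from hm' (measurableSet_singleton 1))
        (measure_ne_top _ _), hmass]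
  ext s hs
  rw [Measure.map_apply hm hs, Measure.map_apply hm' hs,
    bern_preimage P Y hm h01 hs, bern_preimage P Y' hm' h01' hs, hmass, hmass0]

lemma bern_indicator (Y : Ω → ℝ) (h01 : ∀ ω, Y ω = 0 ∨ Y ω = 1) :
    Y = Set.indicator {ω | Y ω = 1} (fun _ => (1:ℝ)) := by
  funext ω
  rcases h01 ω with h | h
  · rw [h, Set.indicator_apply, if_neg (by simp [h])]
  · rw [h, Set.indicator_apply, if_pos (by simp [h])]

lemma bern_integrable (Y : Ω → ℝ) (hm : Measurable Y) (h01 : ∀ ω, Y ω = 0 ∨ Y ω = 1) :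
    Integrable Y P := by
  rw [bern_indicator Y h01]
  exact (integrable_const (1:ℝ)).indicator (hm (measurableSet_singleton 1))

lemma bern_integral (Y : Ω → ℝ) (hm : Measurable Y) (h01 : ∀ ω, Y ω = 0 ∨ Y ω = 1) :
    ∫ ω, Y ω ∂P = (P {ω | Y ω = 1}).toReal := by
  conv_lhs => rw [bern_indicator Y h01]
  rw [integral_indicator_const (1:ℝ)
    (show MeasurableSet {ω | Y ω = 1} from hm (measurableSet_singleton 1))]
  simp [measureReal_def]

/-- law of a finite tuple of jointly independent random variables is the product measure -/
lemma map_tuple_pi {κ : Type*} (f : κ → Ω → ℝ) (hmf : ∀ i, Measurable (f i))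
    (hind : iIndepFun f P)
    {ι : Type*} [Fintype ι] (g : ι → κ) (hg : Function.Injective g) :
    P.map (fun ω (j : ι) => f (g j) ω) = Measure.pi (fun j => P.map (f (g j))) := by
  haveI : ∀ j : ι, IsProbabilityMeasure (P.map (f (g j))) :=
    fun j => Measure.isProbabilityMeasure_map (hmf (g j)).aemeasurable
  have htm : Measurable (fun ω (j : ι) => f (g j) ω) :=
    measurable_pi_lambda _ (fun j => hmf (g j))
  refine (Measure.pi_eq fun s hs => ?_).symm
  rw [Measure.map_apply htm (MeasurableSet.univ_pi hs)]
  set sets : κ → Set ℝ := fun i => if h : ∃ j, g j = i then s h.choose else Set.univ with hsetsdef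
  have hsets : ∀ j : ι, sets (g j) = s j := by
    intro j
    have hex : ∃ j', g j' = g j := ⟨j, rfl⟩
    rw [hsetsdef]
    simp only [dif_pos hex]
    exact congrArg s (hg hex.choose_spec)
  have hpre : (fun ω (j : ι) => f (g j) ω) ⁻¹' (Set.pi Set.univ s)
      = ⋂ i ∈ Finset.univ.image g, f i ⁻¹' sets i := by
    ext ω
    simp only [Set.mem_preimage, Set.mem_pi, Set.mem_univ, forall_true_left,
      Set.mem_iInter, Finset.mem_image, Finset.mem_univ, true_and]
    constructor
    · rintro h i ⟨j, rfl⟩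
      rw [hsets j]; exact h j
    · intro h j
      rw [← hsets j]; exact h (g j) ⟨j, rfl⟩
  rw [hpre, hind.meas_biInter (fun i _ => ?_)]
  · rw [Finset.prod_image (fun j _ j' _ h => hg h)]
    exact Finset.prod_congr rfl fun j _ => by
      rw [hsets j, Measure.map_apply (hmf (g j)) (hs j)]
  · -- measurability of f i ⁻¹' sets i in the comap σ-algebra
    refine ⟨sets i, ?_, rfl⟩
    rw [hsetsdef]
    dsimp only
    split_ifs with h
    · exact hs h.choose
    · exact MeasurableSet.univ

end Stmt9Aux


open MeasureTheory ProbabilityTheory Real Filter Topology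
open scoped ENNReal

namespace Stmt9Aux

/-- conversion between Fin-filtered sums and range sums -/
lemma sum_fin_filter_le {M : Type*} [AddCommMonoid M] {n : ℕ} (k : Fin n) (h : ℕ → M) :
    ∑ i ∈ Finset.univ.filter (fun i : Fin n => i ≤ k), h i.val
      = ∑ t ∈ Finset.range (k.val + 1), h t := by
  classical
  rw [Finset.sum_filter]
  have h1 : ∀ i : Fin n, (if i ≤ k then h i.val else 0)
      = (fun t : ℕ => if t ≤ k.val then h t else 0) i.val := by
    intro i
    simp only [Fin.le_def]
  simp only [h1]
  rw [Fin.sum_univ_eq_sum_range (fun t : ℕ => if t ≤ k.val then h t else 0) n]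
  rw [← Finset.sum_subset (Finset.range_subset_range.mpr (by omega : k.val + 1 ≤ n))
    (fun x _ hx => by rw [if_neg (by simp at hx ⊢; omega)])]
  exact Finset.sum_congr rfl fun t ht => if_pos (by simp at ht; omega)

end Stmt9Aux

theorem stmt9 {Ω : Type*} [MeasurableSpace Ω] (P : Measure Ω) [IsProbabilityMeasure P]
    (μ₀ a : ℝ) (hμ₀ : 0 < μ₀) (hμ₀a : μ₀ < a) (ha : a < 1)
    (X Xa : ℕ → Ω → ℝ)
    (hmeasX : ∀ i, Measurable (X i)) (hmeasXa : ∀ i, Measurable (Xa i))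
    (hindep : iIndepFun (Sum.elim X Xa : ℕ ⊕ ℕ → Ω → ℝ) P)
    (hX01 : ∀ i ω, X i ω = 0 ∨ X i ω = 1)
    (hXa01 : ∀ i ω, Xa i ω = 0 ∨ Xa i ω = 1)
    (hX : ∀ i, (P {ω | X i ω = 1}).toReal = μ₀)
    (hXa : ∀ i, (P {ω | Xa i ω = 1}).toReal = a)
    (D : ℕ → Ω → ℝ) (hD : ∀ k ω, D k ω = ∑ i ∈ Finset.range k, (Xa i ω - X i ω)) :
    (P {ω | ∀ i : ℕ, 1 ≤ i → 0 < D i ω}).toReal = a - μ₀ := by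
  classical
  set c : ℝ := a - μ₀ with hc
  have hc0 : 0 < c := by rw [hc]; linarith
  set Z : ℕ → Ω → ℝ := fun i ω => Xa i ω - X i ω with hZ
  have hmZ : ∀ i, Measurable (Z i) := fun i => (hmeasXa i).sub (hmeasX i)
  have hmf : ∀ j : ℕ ⊕ ℕ, Measurable (Sum.elim X Xa j) := by
    rintro (i | i)
    · exact hmeasX i
    · exact hmeasXa i
  have hDZ : ∀ k ω, D k ω = ∑ i ∈ Finset.range k, Z i ω := fun k ω => hD k ω
  have hDfun : ∀ k, D k = fun ω => ∑ i ∈ Finset.range k, Z i ω :=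
    fun k => funext fun ω => hDZ k ω
  have hmD : ∀ k, Measurable (D k) := fun k => by
    rw [hDfun]; exact Finset.measurable_sum _ fun i _ => hmZ i
  -- identical laws
  have hmassX : ∀ i, P {ω | X i ω = 1} = P {ω | X 0 ω = 1} := fun i =>
    (ENNReal.toReal_eq_toReal_iff' (measure_ne_top _ _) (measure_ne_top _ _)).mp
      (by rw [hX i, hX 0])
  have hmassXa : ∀ i, P {ω | Xa i ω = 1} = P {ω | Xa 0 ω = 1} := fun i =>
    (ENNReal.toReal_eq_toReal_iff' (measure_ne_top _ _) (measure_ne_top _ _)).mp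
      (by rw [hXa i, hXa 0])
  have hlawX : ∀ i, P.map (X i) = P.map (X 0) := fun i =>
    Stmt9Aux.bern_map_eq P _ _ (hmeasX i) (hmeasX 0) (hX01 i) (hX01 0) (hmassX i)
  have hlawXa : ∀ i, P.map (Xa i) = P.map (Xa 0) := fun i =>
    Stmt9Aux.bern_map_eq P _ _ (hmeasXa i) (hmeasXa 0) (hXa01 i) (hXa01 0) (hmassXa i)
  -- integrals
  have hintX : ∀ i, Integrable (X i) P := fun i =>
    Stmt9Aux.bern_integrable P _ (hmeasX i) (hX01 i)
  have hintXa : ∀ i, Integrable (Xa i) P := fun i =>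
    Stmt9Aux.bern_integrable P _ (hmeasXa i) (hXa01 i)
  have hintZ : ∀ i, Integrable (Z i) P := fun i => (hintXa i).sub (hintX i)
  have hEZ : ∀ i, ∫ ω, Z i ω ∂P = c := by
    intro i
    have : ∫ ω, Z i ω ∂P = (∫ ω, Xa i ω ∂P) - ∫ ω, X i ω ∂P := integral_sub (hintXa i) (hintX i)
    rw [this, Stmt9Aux.bern_integral P _ (hmeasXa i) (hXa01 i),
      Stmt9Aux.bern_integral P _ (hmeasX i) (hX01 i), hXa i, hX i]
  have hintD : ∀ n, Integrable (D n) P := fun n => by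
    rw [hDfun]; exact integrable_finset_sum _ fun i _ => hintZ i
  have hED : ∀ n : ℕ, ∫ ω, D n ω ∂P = n * c := by
    intro n
    rw [hDfun, integral_finset_sum _ (fun i _ => hintZ i),
      Finset.sum_congr rfl (fun i _ => hEZ i), Finset.sum_const, Finset.card_range,
      nsmul_eq_mul]
  -- the events
  set Aset : ℕ → Set Ω := fun n => {ω | ∀ i, 1 ≤ i → i ≤ n → 0 < D i ω} with hAdef
  have hAmeas : ∀ n, MeasurableSet (Aset n) := by
    intro n
    show MeasurableSet {ω | ∀ i, 1 ≤ i → i ≤ n → 0 < D i ω}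
    rw [show {ω | ∀ i, 1 ≤ i → i ≤ n → 0 < D i ω}
        = ⋂ i, {ω | 1 ≤ i → i ≤ n → 0 < D i ω} from Set.setOf_forall _]
    refine MeasurableSet.iInter fun i => ?_
    by_cases h : 1 ≤ i ∧ i ≤ n
    · rw [show {ω | 1 ≤ i → i ≤ n → 0 < D i ω} = {ω | 0 < D i ω} by
        ext ω; simp [h.1, h.2]]
      exact measurableSet_lt measurable_const (hmD i)
    · rw [show {ω | 1 ≤ i → i ≤ n → 0 < D i ω} = Set.univ by
        ext ω
        simp only [Set.mem_setOf_eq, Set.mem_univ, iff_true]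
        intro h1 h2
        exact absurd ⟨h1, h2⟩ h]
      exact MeasurableSet.univ
  have hAanti : Antitone Aset := by
    intro m n hmn ω hω i h1 h2
    exact hω i h1 (le_trans h2 hmn)
  have htarget : {ω | ∀ i : ℕ, 1 ≤ i → 0 < D i ω} = ⋂ n, Aset n := by
    ext ω
    simp only [Set.mem_iInter, hAdef, Set.mem_setOf_eq]
    exact ⟨fun h n i h1 _ => h i h1, fun h i h1 => h i i h1 le_rfl⟩
  -- THE KEY IDENTITY (Kemperman):  n * P(Aset n) = E[max(D_n, 0)]
  have key : ∀ n : ℕ, 0 < n → (n : ℝ) * (P (Aset n)).toReal = ∫ ω, max (D n ω) 0 ∂P := by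
    intro n hn
    -- cyclic shifts
    set σ : ℕ → Fin n → ℕ := fun r i => (r + i.val) % n with hσdef
    have hσinj : ∀ r, Function.Injective (σ r) := by
      intro r i j h
      rw [hσdef] at h
      dsimp at h
      have h2 : i.val % n = j.val % n := Nat.ModEq.add_left_cancel' r h
      rwa [Nat.mod_eq_of_lt i.isLt, Nat.mod_eq_of_lt j.isLt, ← Fin.ext_iff] at h2
    set Ztup : ℕ → Ω → (Fin n → ℝ) := fun r ω i => Z (σ r i) ω with hZtupdef
    have hmZtup : ∀ r, Measurable (Ztup r) := fun r => measurable_pi_lambda _ fun i => hmZ _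
    have hmF : Measurable (fun (v : (Fin n ⊕ Fin n) → ℝ) (i : Fin n)
        => v (Sum.inr i) - v (Sum.inl i)) :=
      measurable_pi_lambda _ fun i => (measurable_pi_apply _).sub (measurable_pi_apply _)
    have hlaw : ∀ r, P.map (Ztup r) = (Measure.pi (Sum.elim (fun _ : Fin n => P.map (X 0))
        (fun _ : Fin n => P.map (Xa 0)))).map
          (fun v (i : Fin n) => v (Sum.inr i) - v (Sum.inl i)) := by
      intro r
      set g : (Fin n ⊕ Fin n) → ℕ ⊕ ℕ :=
        Sum.elim (fun i => Sum.inl (σ r i)) (fun i => Sum.inr (σ r i)) with hgdef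
      have hginj : Function.Injective g := by
        rintro (i | i) (j | j) h <;> rw [hgdef] at h <;> dsimp at h
        · exact congrArg Sum.inl (hσinj r (Sum.inl.inj h))
        · exact absurd h (by simp)
        · exact absurd h (by simp)
        · exact congrArg Sum.inr (hσinj r (Sum.inr.inj h))
      have hU := Stmt9Aux.map_tuple_pi P _ hmf hindep g hginj
      have hmarg : (fun j => P.map (Sum.elim X Xa (g j)))
          = Sum.elim (fun _ : Fin n => P.map (X 0)) (fun _ : Fin n => P.map (Xa 0)) := by
        funext j
        rcases j with i | i
        · show P.map (X (σ r i)) = P.map (X 0)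
          exact hlawX _
        · show P.map (Xa (σ r i)) = P.map (Xa 0)
          exact hlawXa _
      have hcomp : Ztup r = (fun v (i : Fin n) => v (Sum.inr i) - v (Sum.inl i))
          ∘ (fun ω (j : Fin n ⊕ Fin n) => Sum.elim X Xa (g j) ω) := rfl
      rw [hcomp, ← Measure.map_map hmF (measurable_pi_lambda _ fun j => hmf (g j)), hU, hmarg]
    set G : Set (Fin n → ℝ) :=
      {v | ∀ k : Fin n, 0 < ∑ i ∈ Finset.univ.filter (fun i : Fin n => i ≤ k), v i} with hGdef
    have hG : MeasurableSet G := by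
      rw [hGdef, show {v : Fin n → ℝ | ∀ k : Fin n,
          0 < ∑ i ∈ Finset.univ.filter (fun i : Fin n => i ≤ k), v i}
          = ⋂ k : Fin n, {v | 0 < ∑ i ∈ Finset.univ.filter (fun i : Fin n => i ≤ k), v i}
        from Set.setOf_forall _]
      exact MeasurableSet.iInter fun k => measurableSet_lt measurable_const
        (Finset.measurable_sum _ fun i _ => measurable_pi_apply i)
    have hEmeas : ∀ r : ℕ, MeasurableSet (Ztup r ⁻¹' G) := fun r => (hmZtup r) hG
    have hPE : ∀ r : ℕ, P (Ztup r ⁻¹' G) = P (Ztup 0 ⁻¹' G) := fun r => by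
      rw [← Measure.map_apply (hmZtup r) hG, ← Measure.map_apply (hmZtup 0) hG, hlaw r, hlaw 0]
    have hEsum : ∀ (r : ℕ) (ω : Ω) (k : Fin n),
        (∑ i ∈ Finset.univ.filter (fun i : Fin n => i ≤ k), Ztup r ω i)
          = ∑ t ∈ Finset.range (k.val + 1), Z ((r + t) % n) ω :=
      fun r ω k => Stmt9Aux.sum_fin_filter_le k (fun t => Z ((r + t) % n) ω)
    have hmod0 : ∀ (k : Fin n) t, t ∈ Finset.range (k.val + 1) → Z ((0 + t) % n) = Z t := by
      intro k t ht
      simp only [Finset.mem_range] at ht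
      rw [Nat.zero_add, Nat.mod_eq_of_lt (by have := k.isLt; omega)]
    have hE0 : Ztup 0 ⁻¹' G = Aset n := by
      ext ω
      simp only [Set.mem_preimage, hGdef, Set.mem_setOf_eq, hAdef]
      constructor
      · intro h i h1 h2
        have h3 := h ⟨i - 1, by omega⟩
        rw [hEsum 0 ω, Finset.sum_congr rfl (fun t ht =>
          congrFun (hmod0 ⟨i - 1, by omega⟩ t ht) ω)] at h3
        rwa [show (⟨i - 1, by omega⟩ : Fin n).val + 1 = i from by dsimp; omega,
          ← hDZ i ω] at h3
      · intro h k
        rw [hEsum 0 ω, Finset.sum_congr rfl (fun t ht => congrFun (hmod0 k t ht) ω),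
          ← hDZ (k.val + 1) ω]
        exact h (k.val + 1) (by omega) (by have := k.isLt; omega)
    have hcount : ∀ ω, max (D n ω) 0
        = ∑ r ∈ Finset.range n, Set.indicator (Ztup r ⁻¹' G) (fun _ => (1:ℝ)) ω := by
      intro ω
      set zI : ℕ → ℤ := fun i =>
        (if Xa i ω = 1 then 1 else 0) - (if X i ω = 1 then 1 else 0) with hzIdef
      have hzcast : ∀ i, ((zI i : ℤ) : ℝ) = Z i ω := by
        intro i
        rcases hX01 i ω with h1 | h1 <;> rcases hXa01 i ω with h2 | h2 <;>
          simp [hzIdef, hZ, h1, h2]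
      have hz1 : ∀ i, zI i ≤ 1 := by
        intro i
        rw [hzIdef]
        dsimp
        split_ifs <;> omega
      have hDn : D n ω = ((Stmt9Aux.psum n zI n : ℤ) : ℝ) := by
        rw [show Stmt9Aux.psum n zI n = ∑ t ∈ Finset.range n, zI (t % n) from rfl]
        push_cast
        rw [Finset.sum_congr rfl (fun t _ => hzcast _), hDZ n ω]
        exact Finset.sum_congr rfl fun t ht => by
          rw [Nat.mod_eq_of_lt (Finset.mem_range.mp ht)]
      have hgood : ∀ r ∈ Finset.range n, Stmt9Aux.good n zI r ↔ ω ∈ Ztup r ⁻¹' G := by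
        intro r hr
        have hgiff : Stmt9Aux.good n zI r ↔ ∀ k ∈ Finset.Icc 1 n,
            (0:ℝ) < ∑ t ∈ Finset.range k, Z ((r + t) % n) ω := by
          unfold Stmt9Aux.good
          refine forall₂_congr fun k hk => ?_
          rw [Stmt9Aux.psum_add, lt_add_iff_pos_right]
          have hcast : ((∑ t ∈ Finset.range k, zI ((r + t) % n) : ℤ) : ℝ)
              = ∑ t ∈ Finset.range k, Z ((r + t) % n) ω := by
            push_cast
            exact Finset.sum_congr rfl fun t _ => hzcast _
          rw [← hcast, Int.cast_pos]
        have hEiff : ω ∈ Ztup r ⁻¹' G ↔ ∀ k : Fin n,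
            (0:ℝ) < ∑ t ∈ Finset.range (k.val + 1), Z ((r + t) % n) ω := by
          simp only [Set.mem_preimage, hGdef, Set.mem_setOf_eq]
          exact forall_congr' fun k => by rw [hEsum r ω k]
        rw [hgiff, hEiff]
        constructor
        · intro h k
          exact h (k.val + 1) (Finset.mem_Icc.mpr ⟨by omega, by have := k.isLt; omega⟩)
        · intro h k hk
          rw [Finset.mem_Icc] at hk
          have h2 := h ⟨k - 1, by omega⟩
          rwa [show (⟨k - 1, by omega⟩ : Fin n).val + 1 = k from by dsimp; omega] at h2
      calc max (D n ω) 0 = ((max (Stmt9Aux.psum n zI n) 0 : ℤ) : ℝ) := by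
            rw [hDn, Int.cast_max]
            norm_num
        _ = ((((Finset.range n).filter (Stmt9Aux.good n zI)).card : ℤ) : ℝ) := by
            rw [Stmt9Aux.cycle_count hn hz1]
        _ = ∑ r ∈ Finset.range n, Set.indicator (Ztup r ⁻¹' G) (fun _ => (1:ℝ)) ω := by
            rw [Int.cast_natCast, Finset.natCast_card_filter]
            refine Finset.sum_congr rfl fun r hr => ?_
            rw [Set.indicator_apply]
            exact if_congr (hgood r hr) rfl rfl
    have hintind : ∀ r : ℕ, Integrable (Set.indicator (Ztup r ⁻¹' G) (fun _ => (1:ℝ))) P :=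
      fun r => (integrable_const (1:ℝ)).indicator (hEmeas r)
    have hfinal : ∫ ω, max (D n ω) 0 ∂P = ∑ r ∈ Finset.range n, (P (Aset n)).toReal := by
      simp_rw [hcount]
      rw [integral_finset_sum _ fun r _ => hintind r]
      refine Finset.sum_congr rfl fun r hr => ?_
      rw [integral_indicator_const (1:ℝ) (hEmeas r), smul_eq_mul, mul_one, measureReal_def, hPE r, hE0]
    rw [hfinal, Finset.sum_const, Finset.card_range, nsmul_eq_mul]
  -- the L¹ bound
  set fn : ℕ → Ω → ℝ := fun n ω => (n : ℝ)⁻¹ * D n ω - c with hfn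
  have hintfn : ∀ n, Integrable (fn n) P := fun n =>
    (((hintD n).const_mul _).sub (integrable_const c))
  have hbound : ∀ n : ℕ, 0 < n → |(P (Aset n)).toReal - c| ≤ (eLpNorm (fn n) 1 P).toReal := by
    intro n hn
    have hn' : (0:ℝ) < n := by exact_mod_cast hn
    have hintmax : Integrable (fun ω => max (D n ω) 0) P := (hintD n).pos_part
    have h2 : ∫ ω, (max (D n ω) 0 - D n ω) ∂P = (∫ ω, max (D n ω) 0 ∂P) - n * c := by
      rw [integral_sub hintmax (hintD n), hED n]
    have h4 : 0 ≤ ∫ ω, (max (D n ω) 0 - D n ω) ∂P :=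
      integral_nonneg fun ω => by simp [le_max_left]
    have h3 : ∫ ω, (max (D n ω) 0 - D n ω) ∂P ≤ ∫ ω, |D n ω - n * c| ∂P := by
      refine integral_mono (hintmax.sub (hintD n)) ((hintD n).sub (integrable_const _)).abs ?_
      intro ω
      dsimp
      rcases le_total (D n ω) 0 with h | h
      · rw [max_eq_right h]
        have h5 : (0:ℝ) ≤ n * c := by positivity
        calc 0 - D n ω ≤ n * c - D n ω := by linarith
        _ = -(D n ω - n * c) := by ring
        _ ≤ |D n ω - n * c| := neg_le_abs _
      · rw [max_eq_left h]
        simp [abs_nonneg]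
    have h5 : (n:ℝ)⁻¹ * ∫ ω, |D n ω - n * c| ∂P = ∫ ω, |fn n ω| ∂P := by
      rw [← integral_const_mul]
      refine integral_congr_ae (Filter.Eventually.of_forall fun ω => ?_)
      rw [hfn]
      dsimp
      rw [show (n:ℝ)⁻¹ * D n ω - c = (n:ℝ)⁻¹ * (D n ω - n * c) by field_simp]
      rw [abs_mul, abs_of_pos (by positivity : (0:ℝ) < (n:ℝ)⁻¹)]
    have h6 : ∫ ω, |fn n ω| ∂P = (eLpNorm (fn n) 1 P).toReal := by
      have := MeasureTheory.ofReal_integral_norm_eq_lintegral_enorm (hintfn n)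
      rw [eLpNorm_one_eq_lintegral_enorm, ← this, ENNReal.toReal_ofReal
        (integral_nonneg fun ω => norm_nonneg _)]
      simp [Real.norm_eq_abs]
    have hPA : (P (Aset n)).toReal = (n:ℝ)⁻¹ * ∫ ω, max (D n ω) 0 ∂P := by
      have := key n hn
      field_simp
      linarith [this]
    have habs : |(P (Aset n)).toReal - c| = (n:ℝ)⁻¹ * ∫ ω, (max (D n ω) 0 - D n ω) ∂P := by
      rw [abs_of_nonneg]
      · rw [hPA, h2]
        field_simp
      · rw [hPA]
        have : (0:ℝ) ≤ (n:ℝ)⁻¹ * ((∫ ω, max (D n ω) 0 ∂P) - n * c) := by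
          rw [← h2]; positivity
        have hne : ((n:ℝ)⁻¹ * (n:ℝ)) = 1 := by field_simp
        nlinarith [this]
    rw [habs, ← h6, ← h5]
    have : ∫ ω, (max (D n ω) 0 - D n ω) ∂P ≤ ∫ ω, |D n ω - n * c| ∂P := h3
    have hninv : (0:ℝ) ≤ (n:ℝ)⁻¹ := by positivity
    exact mul_le_mul_of_nonneg_left h3 hninv
  -- SLLN in L¹
  have hSLLN : Tendsto (fun n => (eLpNorm (fn n) 1 P).toReal) atTop (𝓝 0) := by
    have hpind : Pairwise (Function.onFun (IndepFun · · P) Z) := by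
      intro i j hij
      have hpair := hindep.indepFun_prodMk_prodMk hmf (Sum.inl i) (Sum.inr i)
        (Sum.inl j) (Sum.inr j) (by simp [hij]) (by simp) (by simp) (by simp [hij])
      exact hpair.comp (measurable_snd.sub measurable_fst) (measurable_snd.sub measurable_fst)
    have hident : ∀ i, IdentDistrib (Z i) (Z 0) P P := by
      intro i
      have hpairlaw : ∀ k : ℕ, P.map (fun ω => (X k ω, Xa k ω))
          = (P.map (X 0)).prod (P.map (Xa 0)) := by
        intro k
        have hind2 : IndepFun (X k) (Xa k) P :=
          hindep.indepFun (show (Sum.inl k : ℕ ⊕ ℕ) ≠ Sum.inr k by simp)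
        rw [(indepFun_iff_map_prod_eq_prod_map_map (hmeasX k).aemeasurable
          (hmeasXa k).aemeasurable).mp hind2, hlawX k, hlawXa k]
      have hpairid : IdentDistrib (fun ω => (X i ω, Xa i ω)) (fun ω => (X 0 ω, Xa 0 ω)) P P :=
        ⟨((hmeasX i).prodMk (hmeasXa i)).aemeasurable,
          ((hmeasX 0).prodMk (hmeasXa 0)).aemeasurable, by rw [hpairlaw i, hpairlaw 0]⟩
      exact hpairid.comp (measurable_snd.sub measurable_fst)
    have hmem1 : MemLp (Z 0) 1 P := by
      refine MemLp.of_bound (hmZ 0).aestronglyMeasurable 2 (Filter.Eventually.of_forall fun ω => ?_)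
      rcases hX01 0 ω with h1 | h1 <;> rcases hXa01 0 ω with h2 | h2 <;>
        simp [hZ, h1, h2, Real.norm_eq_abs] <;> norm_num
    have h := strong_law_Lp (le_refl (1:ℝ≥0∞)) (by norm_num) Z hmem1 hpind hident
    have hfneq : (fun (n : ℕ) => eLpNorm (fun ω => (n:ℝ)⁻¹ • (∑ i ∈ Finset.range n, Z i ω)
        - (∫ ω, Z 0 ω ∂P)) 1 P) = fun n => eLpNorm (fn n) 1 P := by
      funext n
      congr 1
      funext ω
      rw [hfn]
      dsimp
      rw [← hDZ n ω, hEZ 0]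
    rw [hfneq] at h
    have h2 := (ENNReal.tendsto_toReal (by norm_num : (0:ℝ≥0∞) ≠ ⊤)).comp h
    exact h2
  -- conclusion
  have htAn : Filter.Tendsto (fun n => (P (Aset n)).toReal) Filter.atTop (nhds c) := by
    have h0 : Filter.Tendsto (fun n => (P (Aset n)).toReal - c) Filter.atTop (nhds 0) := by
      refine squeeze_zero_norm' ?_ hSLLN
      filter_upwards [Filter.eventually_ge_atTop 1] with n hn
      exact hbound n hn
    have := h0.add_const c
    simpa using this
  have htAn2 : Filter.Tendsto (fun n => (P (Aset n)).toReal) Filter.atTop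
      (nhds ((P (⋂ n, Aset n)).toReal)) :=
    (ENNReal.tendsto_toReal (measure_ne_top P _)).comp
      (tendsto_measure_iInter_atTop (fun n => (hAmeas n).nullMeasurableSet) hAanti
        ⟨0, measure_ne_top P _⟩)
  rw [htarget]
  exact tendsto_nhds_unique htAn2 htAn
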